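/- For all real x, y with 0 ≤ y ≤ x, one has sinh(x−y)/(cosh(x)·sinh(y)) ≤ (x−y)/y for y > 0; in particular sinh((a−b)√s)/(cosh(a√s)·sinh(b√s)) ≤ (a−b)/b for all s > 0 when a ≥ b > 0. -/

import Mathlib

open Real

lemma sinh_le_mul_cosh {t : ℝ} (ht : 0 ≤ t) : Real.sinh t ≤ t * Real.cosh t := by
  have key : ∀ u : ℝ, HasDerivAt (fun u => u * Real.cosh u - Real.sinh u)
      (u * Real.sinh u) u := by
    intro u
    have h1 := (hasDerivAt_id u).mul (Real.hasDerivAt_cosh u)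
    have h2 := Real.hasDerivAt_sinh u
    convert h1.sub h2 using 1
    · rfl
    · rfl
    · funext v; simp [mul_comm]
    · simp [mul_comm]
  have hmono : Monotone (fun u : ℝ => u * Real.cosh u - Real.sinh u) := by
    apply monotone_of_deriv_nonneg
    · exact fun u => (key u).differentiableAt
    · intro u
      rw [(key u).deriv]
      rcases le_or_gt 0 u with h | h
      · exact mul_nonneg h (Real.sinh_nonneg_iff.2 h)
      · nlinarith [Real.sinh_nonpos_iff.2 h.le]
  have := hmono ht
  simp at this
  linarith

theorem G_bounded_by_limit :
    (∀ x y : ℝ, 0 < y → y ≤ x →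
      Real.sinh (x - y) / (Real.cosh x * Real.sinh y) ≤ (x - y) / y) ∧
    ∀ a b s : ℝ, 0 < b → b ≤ a → 0 < s →
      Real.sinh ((a - b) * Real.sqrt s) /
          (Real.cosh (a * Real.sqrt s) * Real.sinh (b * Real.sqrt s)) ≤
        (a - b) / b := by
  have main : ∀ x y : ℝ, 0 < y → y ≤ x →
      Real.sinh (x - y) / (Real.cosh x * Real.sinh y) ≤ (x - y) / y := by
    intro x y hy hxy
    have ht : 0 ≤ x - y := sub_nonneg.2 hxy
    have hsy : 0 < Real.sinh y := Real.sinh_pos_iff.2 hy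
    have hcx : 0 < Real.cosh x := Real.cosh_pos x
    rw [div_le_div_iff₀ (mul_pos hcx hsy) hy]
    have h1 : Real.sinh (x - y) ≤ (x - y) * Real.cosh (x - y) := sinh_le_mul_cosh ht
    have h2 : Real.cosh (x - y) ≤ Real.cosh x := by
      rw [Real.cosh_le_cosh, abs_of_nonneg ht, abs_of_nonneg (hy.le.trans hxy)]
      linarith
    have h3 : y ≤ Real.sinh y := Real.self_le_sinh_iff.2 hy.le
    have hc : 0 < Real.cosh (x - y) := Real.cosh_pos (x - y)
    have s1 : Real.sinh (x - y) * y ≤ (x - y) * Real.cosh (x - y) * y :=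
      mul_le_mul_of_nonneg_right h1 hy.le
    have s2 : (x - y) * Real.cosh (x - y) * y ≤ (x - y) * Real.cosh x * y := by
      have := mul_le_mul_of_nonneg_left h2 ht
      nlinarith
    have s3 : (x - y) * Real.cosh x * y ≤ (x - y) * Real.cosh x * Real.sinh y :=
      mul_le_mul_of_nonneg_left h3 (mul_nonneg ht hcx.le)
    nlinarith
  refine ⟨main, fun a b s hb hba hs => ?_⟩
  have hsq : 0 < Real.sqrt s := Real.sqrt_pos.2 hs
  have := main (a * Real.sqrt s) (b * Real.sqrt s) (mul_pos hb hsq)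
    (mul_le_mul_of_nonneg_right hba hsq.le)
  rw [show a * Real.sqrt s - b * Real.sqrt s = (a - b) * Real.sqrt s by ring,
    mul_div_mul_right _ _ (ne_of_gt hsq)] at this
  exact this
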